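/- There exists a function c₀ assigning to every infinite subset of ℕ a pair (ζ, ε) with ζ < 2^{ℵ0} and ε < ω₁, such that for every infinite b ⊆ ℕ and every pair (ζ, ε) with ζ < 2^{ℵ0} and ε < ω₁, there exists an infinite subset v ⊆ b with c₀(v) = (ζ, ε); that is, c₀ restricted to the infinite subsets of any fixed infinite b ⊆ ℕ is surjective onto 2^{ℵ0} × ω₁. -/

import Mathlib

open Cardinal Set

lemma fresh_aux (b : Set ℕ) (hb : b.Infinite) :
    ∃ g : Set ℕ → Set ℕ, Function.Injective g ∧ ∀ A, g A ⊆ b ∧ (g A).Infinite := by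
  have e := hb.natEmbedding
  refine ⟨fun A => (fun n => (e n : ℕ)) '' ({m | ∃ n, m = 2*n} ∪ {m | ∃ n ∈ A, m = 2*n+1}), ?_, ?_⟩
  · have hinj : Function.Injective (fun n => (e n : ℕ)) :=
      fun x y h => e.injective (Subtype.ext h)
    intro A A' h
    have h2 := (Set.image_injective.2 hinj) h
    ext n
    constructor
    · intro hn
      have : (2*n+1 : ℕ) ∈ {m | ∃ n, m = 2*n} ∪ {m | ∃ n ∈ A', m = 2*n+1} := by
        rw [← h2]; right; exact ⟨n, hn, rfl⟩
      rcases this with ⟨k, hk⟩ | ⟨k, hk, hk2⟩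
      · omega
      · have : k = n := by omega
        exact this ▸ hk
    · intro hn
      have : (2*n+1 : ℕ) ∈ {m | ∃ n, m = 2*n} ∪ {m | ∃ n ∈ A, m = 2*n+1} := by
        rw [h2]; right; exact ⟨n, hn, rfl⟩
      rcases this with ⟨k, hk⟩ | ⟨k, hk, hk2⟩
      · omega
      · have : k = n := by omega
        exact this ▸ hk
  · intro A
    constructor
    · rintro x ⟨m, _, rfl⟩; exact (e m).2
    · apply Set.Infinite.mono (Set.image_mono subset_union_left)
      apply Set.Infinite.image
      · intro x _ y _ h; exact e.injective (Subtype.ext h)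
      · apply Set.infinite_of_injective_forall_mem (f := fun n : ℕ => 2*n)
        · intro a b h; simp only [] at h; omega
        · intro a; exact ⟨a, rfl⟩

lemma fresh (b : Set ℕ) (hb : b.Infinite) (P : Set (Set ℕ)) (hP : #P < Cardinal.continuum) :
    ∃ v, v ⊆ b ∧ v.Infinite ∧ v ∉ P := by
  by_contra h
  push_neg at h
  obtain ⟨g, hg, hgp⟩ := fresh_aux b hb
  have : Cardinal.continuum ≤ #P := by
    have : #(Set ℕ) ≤ #P :=
      Cardinal.mk_le_of_injective (f := fun A => (⟨g A, h _ (hgp A).1 (hgp A).2⟩ : P))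
        (fun A A' hAA => hg (congrArg Subtype.val hAA))
    rwa [Cardinal.mk_set, Cardinal.mk_nat, Cardinal.two_power_aleph0] at this
  exact absurd hP (not_lt.2 this)
noncomputable section

abbrev OO : Ordinal.{0} := Cardinal.continuum.ord
abbrev WW : Ordinal.{0} := (Cardinal.aleph 1).ord

def TT := {p : Set ℕ × Ordinal.{0} × Ordinal.{0} // p.1.Infinite ∧ p.2.1 < OO ∧ p.2.2 < WW}

lemma zero_lt_OO : (0 : Ordinal) < OO := by
  rw [Cardinal.lt_ord]; simp [Cardinal.continuum_pos]

lemma zero_lt_WW : (0 : Ordinal) < WW := by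
  rw [Cardinal.lt_ord]; simp [Cardinal.aleph_pos]

instance : Nonempty TT := ⟨⟨(Set.univ, 0, 0), Set.infinite_univ, zero_lt_OO, zero_lt_WW⟩⟩

lemma exists_surj : ∃ e : ↥(Set.Iio OO) → TT, Function.Surjective e := by
  have h1 : #(Set.Iio OO) = Cardinal.lift.{1} Cardinal.continuum.{0} := by
    rw [Ordinal.mk_Iio_ordinal, Cardinal.card_ord]
  have h2 : #TT ≤ Cardinal.lift.{1} Cardinal.continuum.{0} := by
    have : #TT ≤ #(ULift.{1} (Set ℕ) × ↥(Set.Iio OO) × ↥(Set.Iio WW)) := by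
      apply Cardinal.mk_le_of_injective
        (f := fun t => ((⟨t.1.1⟩ : ULift.{1} (Set ℕ)), ⟨t.1.2.1, t.2.2.1⟩, ⟨t.1.2.2, t.2.2.2⟩))
      rintro ⟨⟨b, z, e⟩, _⟩ ⟨⟨b', z', e'⟩, _⟩ h
      simp only [Prod.mk.injEq, Subtype.mk.injEq] at h
      refine Subtype.ext ?_
      simp only [Prod.mk.injEq]
      exact ⟨congrArg ULift.down h.1, congrArg Subtype.val h.2.1, congrArg Subtype.val h.2.2⟩
    refine this.trans ?_
    rw [Cardinal.mk_prod, Cardinal.mk_prod, h1, Ordinal.mk_Iio_ordinal, Cardinal.card_ord]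
    simp only [Cardinal.mk_uLift, Cardinal.mk_set, Cardinal.mk_nat, Cardinal.two_power_aleph0,
      Cardinal.lift_lift, Cardinal.lift_id]
    rw [← Cardinal.lift_mul, ← Cardinal.lift_mul, Cardinal.lift_le]
    calc 𝔠 * (𝔠 * ℵ₁) ≤ 𝔠 * (𝔠 * 𝔠) :=
          mul_le_mul_right (mul_le_mul_right Cardinal.aleph_one_le_continuum _) _
      _ = 𝔠 := by rw [Cardinal.mul_eq_self Cardinal.aleph0_le_continuum,
            Cardinal.mul_eq_self Cardinal.aleph0_le_continuum]
  have h3 : #TT ≤ #(Set.Iio OO) := h1 ▸ h2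
  obtain ⟨f⟩ := h3
  exact ⟨Function.invFun f, Function.invFun_surjective f.injective⟩

def ee : ↥(Set.Iio OO) → TT := (exists_surj).choose

lemma ee_surj : Function.Surjective ee := (exists_surj).choose_spec

def BB (α : Ordinal.{0}) : Set ℕ := if h : α < OO then (ee ⟨α, h⟩).1.1 else Set.univ

def PP (α : Ordinal.{0}) : Ordinal.{0} × Ordinal.{0} :=
  if h : α < OO then (ee ⟨α, h⟩).1.2 else (0, 0)

lemma BB_infinite (α : Ordinal.{0}) : (BB α).Infinite := by
  unfold BB; split
  · exact (ee _).2.1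
  · exact Set.infinite_univ

lemma PP_lt (α : Ordinal.{0}) : (PP α).1 < OO ∧ (PP α).2 < WW := by
  unfold PP; split
  · exact ⟨(ee _).2.2.1, (ee _).2.2.2⟩
  · exact ⟨zero_lt_OO, zero_lt_WW⟩


lemma freshAux (b : Set ℕ) (P : Set (Set ℕ)) :
    ∃ v, b.Infinite → #P < Cardinal.continuum → v ⊆ b ∧ v.Infinite ∧ v ∉ P := by
  by_cases hb : b.Infinite
  · by_cases hP : #P < Cardinal.continuum
    · obtain ⟨v, h⟩ := fresh b hb P hP; exact ⟨v, fun _ _ => h⟩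
    · exact ⟨∅, fun _ h => absurd h hP⟩
  · exact ⟨∅, fun h => absurd h hb⟩

def ff : Ordinal.{0} → Set ℕ :=
  Ordinal.lt_wf.fix fun α ih =>
    (freshAux (BB α) {v | ∃ β, ∃ h : β < α, ih β h = v}).choose

lemma ff_eq (α : Ordinal.{0}) :
    ff α = (freshAux (BB α) {v | ∃ β, ∃ _ : β < α, ff β = v}).choose :=
  Ordinal.lt_wf.fix_eq _ α

lemma card_prev (α : Ordinal.{0}) (h : α < OO) :
    #({v | ∃ β, ∃ _ : β < α, ff β = v} : Set (Set ℕ)) < Cardinal.continuum := by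
  have him : {v | ∃ β, ∃ _ : β < α, ff β = v} = ff '' (Set.Iio α) := by
    ext v
    simp only [Set.mem_setOf_eq, Set.mem_image, Set.mem_Iio]
    exact ⟨fun ⟨β, hβ, he⟩ => ⟨β, hβ, he⟩, fun ⟨β, hβ, he⟩ => ⟨β, hβ, he⟩⟩
  rw [him]
  have h1 : Cardinal.lift.{1} #(ff '' Set.Iio α) ≤ Cardinal.lift.{1} α.card := by
    have h2 := Cardinal.mk_image_le_lift (f := ff) (s := Set.Iio α)
    rw [Ordinal.mk_Iio_ordinal] at h2
    simpa using h2
  rw [Cardinal.lift_le] at h1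
  exact h1.trans_lt (Cardinal.lt_ord.1 h)

lemma ff_spec (α : Ordinal.{0}) (h : α < OO) :
    ff α ⊆ BB α ∧ (ff α).Infinite ∧ ff α ∉ {v | ∃ β, ∃ _ : β < α, ff β = v} := by
  have := (freshAux (BB α) {v | ∃ β, ∃ _ : β < α, ff β = v}).choose_spec
    (BB_infinite α) (card_prev α h)
  rwa [← ff_eq] at this

lemma ff_inj {α β : Ordinal.{0}} (hα : α < OO) (hβ : β < OO) (h : ff α = ff β) : α = β := by
  rcases lt_trichotomy α β with h1 | h1 | h1
  · exact absurd (⟨α, h1, h⟩ : ff β ∈ {v | ∃ γ, ∃ _ : γ < β, ff γ = v})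
      (ff_spec β hβ).2.2
  · exact h1
  · exact absurd (⟨β, h1, h.symm⟩ : ff α ∈ {v | ∃ γ, ∃ _ : γ < α, ff γ = v})
      (ff_spec α hα).2.2

open Classical in
noncomputable def cc (v : Set ℕ) : Ordinal.{0} × Ordinal.{0} :=
  if h : ∃ α, α < OO ∧ ff α = v then PP h.choose else (0, 0)

/-- there is a function `c₀` assigning to the infinite subsets of `ℕ`
pairs `(ζ, ε)` with `ζ < 2^{ℵ₀}` and `ε < ω₁`, such that on the infinite subsets of any
fixed infinite `b ⊆ ℕ`, `c₀` attains every such pair `(ζ, ε)`. -/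
theorem exists_pair_coloring :
    ∃ c₀ : Set ℕ → Ordinal.{0} × Ordinal.{0},
      (∀ v : Set ℕ, v.Infinite →
        (c₀ v).1 < Cardinal.continuum.ord ∧ (c₀ v).2 < (Cardinal.aleph 1).ord) ∧
      ∀ b : Set ℕ, b.Infinite →
        ∀ ζ < Cardinal.continuum.ord, ∀ ε < (Cardinal.aleph 1).ord,
          ∃ v ⊆ b, v.Infinite ∧ c₀ v = (ζ, ε) := by
  refine ⟨cc, ?_, ?_⟩
  · intro v _
    by_cases h : ∃ α, α < OO ∧ ff α = v
    · have hc : cc v = PP h.choose := by unfold cc; rw [dif_pos h]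
      rw [hc]
      exact ⟨(PP_lt _).1, (PP_lt _).2⟩
    · have hc : cc v = (0, 0) := by unfold cc; rw [dif_neg h]
      rw [hc]
      exact ⟨zero_lt_OO, zero_lt_WW⟩
  · intro b hb ζ hζ ε hε
    obtain ⟨⟨α, hα0⟩, hαe⟩ := ee_surj ⟨(b, ζ, ε), hb, hζ, hε⟩
    have hα : α < OO := hα0
    have hBB : BB α = b := by unfold BB; rw [dif_pos hα, hαe]
    have hPP : PP α = (ζ, ε) := by unfold PP; rw [dif_pos hα, hαe]
    obtain ⟨hsub, hinf, -⟩ := ff_spec α hα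
    refine ⟨ff α, hBB ▸ hsub, hinf, ?_⟩
    have h : ∃ γ, γ < OO ∧ ff γ = ff α := ⟨α, hα, rfl⟩
    have h2 : h.choose = α := ff_inj h.choose_spec.1 hα h.choose_spec.2
    have hc : cc (ff α) = PP h.choose := by unfold cc; rw [dif_pos h]
    rw [hc, h2, hPP]

end
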